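/- arXiv:math/0610820 — 2 statements merged into one kernel-verified Lean document; each statement's English description precedes it below -/
import Mathlib

section
/- Let Θ be the solenoid of type (w₁, w₂, …), let n ≥ 0, and let l be a positive integer relatively prime to w_{n'} for all n' > n. Then the translation ψₙ : Γₙ → Γₙ, ψₙ(x) = γ(w₁⋯wₙ)·x, is topologically conjugate to its l-th iterate ψₙ^l; indeed the l-th power automorphism θ : Γₙ → Γₙ, θ(x) = x^l, is a homeomorphism satisfying θ ∘ ψₙ = ψₙ^l ∘ θ. -/
open Topology

/-- The solenoid of type `(w 0, w 1, …)` (denoted `(w₁, w₂, …)` in the paper),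
as a subgroup of the product of countably many circles:
`{(x₀, x₁, …) : xₙ₋₁ = xₙ ^ wₙ for all n ≥ 1}`. -/
noncomputable def solenoidSubgroup (w : ℕ → ℕ) : Subgroup (ℕ → Circle) where
  carrier := {x | ∀ n, x n = x (n + 1) ^ w n}
  one_mem' := by intro n; simp
  mul_mem' := by intro a b ha hb n; simp only [Pi.mul_apply, ha n, hb n, mul_pow]
  inv_mem' := by intro a ha n; simp only [Pi.inv_apply, ha n, inv_pow]

/-- The solenoid as a topological space, with the subspace topology from the
product topology. -/
noncomputable abbrev Solenoid (w : ℕ → ℕ) : Type :=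
  ↥(solenoidSubgroup w)

/-- `Γₙ`, the kernel of the projection of the solenoid onto its `n`-th
coordinate: `{x ∈ Θ | x₀ = x₁ = ⋯ = xₙ = 1}`, as a subgroup of the solenoid. -/
noncomputable def gammaSubgroup (w : ℕ → ℕ) (n : ℕ) : Subgroup (Solenoid w) where
  carrier := {x | ∀ k ≤ n, (x : ℕ → Circle) k = 1}
  one_mem' := by intro k _; simp
  mul_mem' := by
    intro a b ha hb k hk
    simp only [Subgroup.coe_mul, Pi.mul_apply, ha k hk, hb k hk, one_mul]
  inv_mem' := by
    intro a ha k hk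
    simp only [Subgroup.coe_inv, Pi.inv_apply, ha k hk, inv_one]

private lemma circle_exp_pow (b : ℝ) (m : ℕ) :
    Circle.exp b ^ m = Circle.exp (m * b) := by
  induction m with
  | zero => simp
  | succ k ih =>
    rw [pow_succ, ih, ← Circle.exp_add, Nat.cast_succ]
    ring_nf

private lemma w_cast_ne_zero {w : ℕ → ℕ} (hw : ∀ n, 1 < w n) (j : ℕ) :
    (w j : ℝ) ≠ 0 := by
  exact_mod_cast (Nat.zero_lt_of_lt (hw j)).ne'

private lemma prod_w_ne_zero {w : ℕ → ℕ} (hw : ∀ n, 1 < w n) (k : ℕ) :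
    (∏ j ∈ Finset.range k, (w j : ℝ)) ≠ 0 :=
  Finset.prod_ne_zero_iff.mpr fun j _ => w_cast_ne_zero hw j

private lemma solenoidGamma_mem (w : ℕ → ℕ) (hw : ∀ n, 1 < w n) (t : ℝ) :
    (fun k => Circle.exp (2 * Real.pi * t / ∏ j ∈ Finset.range k, (w j : ℝ)))
      ∈ solenoidSubgroup w := by
  intro k
  show Circle.exp _ = Circle.exp _ ^ w k
  rw [circle_exp_pow]
  congr 1
  rw [Finset.prod_range_succ]
  have h1 := prod_w_ne_zero hw k
  have h2 := w_cast_ne_zero hw k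
  field_simp

/-- The one-parameter subgroup `γ : ℝ → Θ`,
`γ(t) = (e^{2πit}, e^{2πit/w₁}, e^{2πit/(w₁w₂)}, …)`. -/
noncomputable def solenoidGamma (w : ℕ → ℕ) (hw : ∀ n, 1 < w n) (t : ℝ) :
    Solenoid w :=
  ⟨fun k => Circle.exp (2 * Real.pi * t / ∏ j ∈ Finset.range k, (w j : ℝ)),
    solenoidGamma_mem w hw t⟩

private lemma solenoidGamma_mem_gamma (w : ℕ → ℕ) (hw : ∀ n, 1 < w n) (n : ℕ) :
    solenoidGamma w hw (∏ j ∈ Finset.range n, (w j : ℝ)) ∈ gammaSubgroup w n := by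
  intro k hk
  show Circle.exp _ = 1
  have h1 := prod_w_ne_zero hw k
  have key : 2 * Real.pi * (∏ j ∈ Finset.range n, (w j : ℝ)) /
      (∏ j ∈ Finset.range k, (w j : ℝ)) =
      ((∏ j ∈ Finset.Ico k n, w j : ℕ) : ℤ) * (2 * Real.pi) := by
    rw [← Finset.prod_range_mul_prod_Ico (fun j => ((w j : ℝ))) hk]
    push_cast
    field_simp
  rw [key]
  exact Circle.exp_int_mul_two_pi _

/-- The translation `ψₙ : Γₙ → Γₙ`, `ψₙ(x) = γ(w₁⋯wₙ) · x`. -/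
noncomputable def solenoidPsi (w : ℕ → ℕ) (hw : ∀ n, 1 < w n) (n : ℕ) :
    ↥(gammaSubgroup w n) → ↥(gammaSubgroup w n) :=
  fun x =>
    (⟨solenoidGamma w hw (∏ j ∈ Finset.range n, (w j : ℝ)),
      solenoidGamma_mem_gamma w hw n⟩ : ↥(gammaSubgroup w n)) * x


instance solenoidCompact (w : ℕ → ℕ) : CompactSpace (Solenoid w) := by
  apply isCompact_iff_compactSpace.mp
  apply IsClosed.isCompact
  have : (solenoidSubgroup w : Set (ℕ → Circle)) =
      ⋂ n, {x : ℕ → Circle | x n = x (n + 1) ^ w n} := by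
    ext x
    simp only [Set.mem_iInter, Set.mem_setOf_eq]
    rfl
  rw [this]
  exact isClosed_iInter fun n =>
    isClosed_eq (continuous_apply n) ((continuous_apply (n + 1)).pow _)

instance gammaCompact (w : ℕ → ℕ) (n : ℕ) : CompactSpace ↥(gammaSubgroup w n) := by
  apply isCompact_iff_compactSpace.mp
  apply IsClosed.isCompact
  have : (gammaSubgroup w n : Set (Solenoid w)) =
      ⋂ k, ⋂ (_ : k ≤ n), {x : Solenoid w | (x : ℕ → Circle) k = 1} := by
    ext x
    simp only [Set.mem_iInter, Set.mem_setOf_eq]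
    rfl
  rw [this]
  exact isClosed_iInter fun k => isClosed_iInter fun _ =>
    isClosed_eq ((continuous_apply k).comp continuous_subtype_val) continuous_const

private lemma solenoid_tower {w : ℕ → ℕ} (x : Solenoid w) {a b : ℕ} (hab : a ≤ b) :
    (x : ℕ → Circle) a = (x : ℕ → Circle) b ^ ∏ j ∈ Finset.Ico a b, w j := by
  have hx : ∀ m, (x : ℕ → Circle) m = (x : ℕ → Circle) (m + 1) ^ w m := x.2
  induction b, hab using Nat.le_induction with
  | base => simp
  | succ b hab ih =>
    rw [ih, hx b, ← pow_mul, Finset.prod_Ico_succ_top hab, mul_comm]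

private lemma circle_eq_one_of_pows {z : Circle} {a b : ℕ} (ha : z ^ a = 1)
    (hb : z ^ b = 1) (h : Nat.Coprime a b) : z = 1 := by
  have h3 : orderOf z ∣ Nat.gcd a b :=
    Nat.dvd_gcd (orderOf_dvd_of_pow_eq_one ha) (orderOf_dvd_of_pow_eq_one hb)
  rw [Nat.Coprime] at h
  rw [h, Nat.dvd_one] at h3
  exact orderOf_eq_one_iff.mp h3

/-- If `l` is a positive integer relatively prime to `wₙ'` for all `n' > n`
(in our indexing, coprime to `w m` for all `m ≥ n`), then the translation
`ψₙ : Γₙ → Γₙ` is topologically conjugate to its `l`-th iterate `ψₙ^l`: the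
`l`-th power map `θ(x) = x^l` is a homeomorphism with `θ ∘ ψₙ = ψₙ^l ∘ θ`. -/
theorem psi_conjugate_to_iterate
    (w : ℕ → ℕ) (hw : ∀ n, 1 < w n) (n : ℕ)
    (l : ℕ) (hl : 0 < l) (hcop : ∀ m ≥ n, Nat.Coprime l (w m)) :
    IsHomeomorph (fun x : ↥(gammaSubgroup w n) => x ^ l) ∧
    (fun x : ↥(gammaSubgroup w n) => x ^ l) ∘ solenoidPsi w hw n =
      (solenoidPsi w hw n)^[l] ∘ (fun x : ↥(gammaSubgroup w n) => x ^ l) := by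
  have hcW : ∀ k, Nat.Coprime l (∏ j ∈ Finset.Ico n k, w j) := fun k =>
    Nat.Coprime.prod_right fun j hj => hcop j (Finset.mem_Ico.mp hj).1
  have key : ∀ z : ↥(gammaSubgroup w n), z ^ l = 1 → z = 1 := by
    intro z hz
    refine Subtype.ext (Subtype.ext (funext fun k => ?_))
    show ((z : Solenoid w) : ℕ → Circle) k = 1
    by_cases hk : k ≤ n
    · exact z.2 k hk
    · have hnk : n ≤ k := le_of_not_ge hk
      have h1 : ((z : Solenoid w) : ℕ → Circle) k ^ l = 1 := by
        have := congrArg (fun t : ↥(gammaSubgroup w n) =>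
          ((t : Solenoid w) : ℕ → Circle) k) hz
        exact this
      have h2 : ((z : Solenoid w) : ℕ → Circle) k ^ (∏ j ∈ Finset.Ico n k, w j) = 1 := by
        rw [← solenoid_tower (z : Solenoid w) hnk]
        exact z.2 n le_rfl
      exact circle_eq_one_of_pows h1 h2 (hcW k)
  have hinj : Function.Injective (fun x : ↥(gammaSubgroup w n) => x ^ l) := by
    intro x y hxy
    have h1 : (x / y) ^ l = 1 := by
      rw [div_pow]
      simp only at hxy
      rw [hxy, div_self']
    have := key _ h1
    rwa [div_eq_one] at this
  have hsurj : Function.Surjective (fun x : ↥(gammaSubgroup w n) => x ^ l) := by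
    intro y
    set Y : ℕ → Circle := ((y : Solenoid w) : ℕ → Circle) with hYdef
    have hY : ∀ k, Y k ^ (∏ j ∈ Finset.Ico n k, w j) = 1 := by
      intro k
      by_cases hk : n ≤ k
      · rw [← solenoid_tower (y : Solenoid w) hk]
        exact y.2 n le_rfl
      · have h1 : Y k = 1 := y.2 k (le_of_not_ge hk)
        rw [h1, one_pow]
    have hex : ∀ k, ∃ u v : ℤ, u * l + v * (∏ j ∈ Finset.Ico n k, w j : ℕ) = 1 :=
      fun k => Nat.isCoprime_iff_coprime.mpr (hcW k)
    choose u v huv using hex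
    have hYW : ∀ k, Y k ^ ((∏ j ∈ Finset.Ico n k, w j : ℕ) : ℤ) = 1 := by
      intro k; rw [zpow_natCast]; exact hY k
    set X : ℕ → Circle := fun k => Y k ^ (u k) with hXdef
    have hXl : ∀ k, X k ^ l = Y k := by
      intro k
      have e1 : X k ^ l = Y k ^ (u k * l) := by
        rw [hXdef, ← zpow_natCast (Y k ^ u k) l, ← zpow_mul]
      rw [e1]
      have e2 : u k * l = 1 - v k * (∏ j ∈ Finset.Ico n k, w j : ℕ) := by
        have := huv k; linarith
      rw [e2, zpow_sub, zpow_one, mul_comm (v k), zpow_mul, hYW k, one_zpow]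
      simp
    have hXW : ∀ k, X k ^ (∏ j ∈ Finset.Ico n k, w j) = 1 := by
      intro k
      rw [hXdef]
      simp only
      rw [← zpow_natCast (Y k ^ u k), ← zpow_mul, mul_comm, zpow_mul, hYW k, one_zpow]
    have hXone : ∀ k ≤ n, X k = 1 := by
      intro k hk
      have h1 : Y k = 1 := y.2 k hk
      rw [hXdef]
      simp only
      rw [h1, one_zpow]
    have hXsol : X ∈ solenoidSubgroup w := by
      intro k
      by_cases hk : n ≤ k
      · have hYrel : Y k = Y (k + 1) ^ w k := (y : Solenoid w).2 k
        have hW1 : (∏ j ∈ Finset.Ico n (k + 1), w j)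
            = (∏ j ∈ Finset.Ico n k, w j) * w k := Finset.prod_Ico_succ_top hk w
        have hz : X k / X (k + 1) ^ w k = 1 := by
          apply circle_eq_one_of_pows (b := ∏ j ∈ Finset.Ico n (k + 1), w j)
          · rw [div_pow, hXl k, ← pow_mul, mul_comm (w k) l, pow_mul, hXl (k + 1),
              ← hYrel, div_self']
          · rw [div_pow, hW1, pow_mul, hXW k, one_pow, ← pow_mul,
              mul_comm (w k), pow_mul, ← hW1, hXW (k + 1), one_pow, div_self']
          · exact hcW (k + 1)
        rw [div_eq_one] at hz
        exact hz
      · have hk' : k + 1 ≤ n := Nat.succ_le_of_lt (lt_of_not_ge hk)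
        rw [hXone k (le_of_not_ge hk), hXone (k + 1) hk', one_pow]
    refine ⟨⟨⟨X, hXsol⟩, fun k hk => hXone k hk⟩, ?_⟩
    exact Subtype.ext (Subtype.ext (funext fun k => hXl k))
  constructor
  · rw [isHomeomorph_iff_continuous_bijective]
    exact ⟨continuous_pow l, hinj, hsurj⟩
  · funext x
    simp only [Function.comp_apply, solenoidPsi]
    set g : ↥(gammaSubgroup w n) :=
      ⟨solenoidGamma w hw (∏ j ∈ Finset.range n, (w j : ℝ)),
        solenoidGamma_mem_gamma w hw n⟩
    have hfn : solenoidPsi w hw n = fun y : ↥(gammaSubgroup w n) => g * y := rfl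
    rw [hfn, mul_left_iterate, mul_pow]
end

section
/- Let Θ be the solenoid of type (w₁, w₂, …), let n ≥ 0, and let l be a positive integer relatively prime to w_{n'} for all n' > n. Then the mapping torus of the l-th iterate ψₙ^l of the translation ψₙ : Γₙ → Γₙ, ψₙ(x) = γ(w₁⋯wₙ)·x, is homeomorphic to Θ. -/
open Topology

/-- The defining identification of the mapping torus of `f : Y → Y`:
`(y, 1)` is glued to `(f y, 0)` in `Y × [0,1]`. -/
def MappingTorusRel {Y : Type*} (f : Y → Y) (a b : Y × ↥unitInterval) : Prop :=
  a.2 = 1 ∧ b.2 = 0 ∧ b.1 = f a.1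

/-- The mapping torus of `f : Y → Y`: the quotient of `Y × [0,1]` obtained by
identifying `(y, 1)` with `(f y, 0)`, with the quotient topology. -/
def MappingTorus {Y : Type*} [TopologicalSpace Y] (f : Y → Y) : Type _ :=
  Quot (MappingTorusRel f)

noncomputable instance {Y : Type*} [TopologicalSpace Y] (f : Y → Y) :
    TopologicalSpace (MappingTorus f) :=
  inferInstanceAs (TopologicalSpace (Quot (MappingTorusRel f)))

/-! ### Auxiliary material for Claim 5 -/

section Claim5Aux

/-- Product of weights over `[n, k)`. -/
private def solM (w : ℕ → ℕ) (n k : ℕ) : ℕ := ∏ j ∈ Finset.Ico n k, w j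

private lemma solM_pos {w : ℕ → ℕ} (hw : ∀ n, 1 < w n) (n k : ℕ) : 0 < solM w n k :=
  Finset.prod_pos fun j _ => Nat.lt_of_lt_of_le Nat.zero_lt_one (hw j).le

private lemma solM_dvd_succ (w : ℕ → ℕ) (n k : ℕ) : solM w n k ∣ solM w n (k + 1) :=
  Finset.prod_dvd_prod_of_subset _ _ _ (Finset.Ico_subset_Ico le_rfl (Nat.le_succ k))

/-- Powers of a torsion element of the circle depend only on the exponent
modulo the order. -/
private lemma circle_pow_eq_pow_of_modEq {z : Circle} {M a b : ℕ} (hz : z ^ M = 1)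
    (hab : a ≡ b [MOD M]) : z ^ a = z ^ b := by
  have key : ∀ c : ℕ, z ^ c = z ^ (c % M) := fun c => by
    conv_lhs => rw [← Nat.mod_add_div c M]
    rw [pow_add, pow_mul, hz, one_pow, mul_one]
  rw [key a, key b]
  exact congrArg _ hab

/-- In the solenoid, an earlier coordinate is the appropriate power of a
later coordinate. -/
private lemma sol_coord_pow {w : ℕ → ℕ} {x : ℕ → Circle}
    (hx : x ∈ solenoidSubgroup w) {a b : ℕ} (hab : a ≤ b) :
    x a = x b ^ solM w a b := by
  induction b, hab using Nat.le_induction with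
  | base => simp [solM]
  | succ b hab ih =>
    calc x a = x b ^ solM w a b := ih
      _ = (x (b + 1) ^ w b) ^ solM w a b := by rw [← hx b]
      _ = x (b + 1) ^ solM w a (b + 1) := by
          rw [← pow_mul, solM, solM, Finset.prod_Ico_succ_top hab, mul_comm]

/-- The coordinates of elements of `Γₙ` are torsion, of order dividing
`wₙ₊₁ ⋯ w_k`. -/
private lemma gamma_coord_pow {w : ℕ → ℕ} {n : ℕ} {x : Solenoid w}
    (hx : x ∈ gammaSubgroup w n) (k : ℕ) :
    (x : ℕ → Circle) k ^ solM w n k = 1 := by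
  rcases le_or_gt n k with h | h
  · rw [← sol_coord_pow x.2 h]
    exact hx n le_rfl
  · have hM : solM w n k = 1 := by
      rw [solM, Finset.Ico_eq_empty (by omega), Finset.prod_empty]
    rw [hM, pow_one]
    exact hx k h.le

/-- A natural number serving as an inverse of `l` modulo `solM w n k`. -/
private def solU (w : ℕ → ℕ) (n l k : ℕ) : ℕ :=
  l ^ (Nat.totient (solM w n k) - 1)

private lemma l_coprime_solM {w : ℕ → ℕ} {n l : ℕ}
    (hcop : ∀ m ≥ n, Nat.Coprime l (w m)) (k : ℕ) :
    Nat.Coprime l (solM w n k) :=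
  Nat.Coprime.prod_right fun j hj => hcop j (Finset.mem_Ico.mp hj).1

private lemma l_mul_solU_modEq {w : ℕ → ℕ} (hw : ∀ n, 1 < w n) {n l : ℕ}
    (hcop : ∀ m ≥ n, Nat.Coprime l (w m)) (k : ℕ) :
    l * solU w n l k ≡ 1 [MOD solM w n k] := by
  have hpos := solM_pos hw n k
  have hφ : 1 ≤ Nat.totient (solM w n k) := Nat.totient_pos.mpr hpos
  have key : l * solU w n l k = l ^ Nat.totient (solM w n k) := by
    rw [solU, ← pow_succ']
    congr 1
    omega
  rw [key]
  exact Nat.ModEq.pow_totient (l_coprime_solM hcop k)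

private lemma solU_modEq_succ {w : ℕ → ℕ} (hw : ∀ n, 1 < w n) {n l : ℕ}
    (hcop : ∀ m ≥ n, Nat.Coprime l (w m)) (k : ℕ) :
    solU w n l k ≡ solU w n l (k + 1) [MOD solM w n k] := by
  have h1 := l_mul_solU_modEq hw hcop k
  have h2 : l * solU w n l (k + 1) ≡ 1 [MOD solM w n k] :=
    (l_mul_solU_modEq hw hcop (k + 1)).of_dvd (solM_dvd_succ w n k)
  exact Nat.ModEq.cancel_left_of_coprime (l_coprime_solM hcop k).symm
    (h1.trans h2.symm)

/-- Raising each coordinate to a coherent family of powers gives a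
self-map of `Γₙ`. -/
private noncomputable def gammaPow {w : ℕ → ℕ} {n : ℕ} (u : ℕ → ℕ)
    (hu : ∀ (x : ↥(gammaSubgroup w n)) (k : ℕ),
      (x : Solenoid w).1 k ^ u k = (x : Solenoid w).1 k ^ u (k + 1)) :
    ↥(gammaSubgroup w n) → ↥(gammaSubgroup w n) := fun x =>
  ⟨⟨fun k => (x : Solenoid w).1 k ^ u k, by
      intro k
      show (x : Solenoid w).1 k ^ u k = ((x : Solenoid w).1 (k + 1) ^ u (k + 1)) ^ w k
      rw [hu x k]
      conv_lhs => rw [(x : Solenoid w).2 k]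
      rw [← pow_mul, ← pow_mul, mul_comm]⟩, by
    intro k hk
    show (x : Solenoid w).1 k ^ u k = 1
    rw [x.2 k hk, one_pow]⟩

private lemma continuous_gammaPow {w : ℕ → ℕ} {n : ℕ} (u : ℕ → ℕ) (hu) :
    Continuous (gammaPow (w := w) (n := n) u hu) := by
  apply Continuous.subtype_mk
  apply Continuous.subtype_mk
  exact continuous_pi fun k =>
    ((continuous_apply k).comp (continuous_subtype_val.comp continuous_subtype_val)).pow _

private lemma gammaPow_mul {w : ℕ → ℕ} {n : ℕ} (u : ℕ → ℕ) (hu)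
    (a b : ↥(gammaSubgroup w n)) :
    gammaPow u hu (a * b) = gammaPow u hu a * gammaPow u hu b := by
  apply Subtype.ext
  apply Subtype.ext
  funext k
  show ((a * b : ↥(gammaSubgroup w n)) : Solenoid w).1 k ^ u k
    = (a : Solenoid w).1 k ^ u k * (b : Solenoid w).1 k ^ u k
  have : ((a * b : ↥(gammaSubgroup w n)) : Solenoid w).1 k
      = (a : Solenoid w).1 k * (b : Solenoid w).1 k := rfl
  rw [this, mul_pow]

/-- hypothesis-check for `gammaPow` with exponents `solU`. -/
private lemma hu_solU {w : ℕ → ℕ} (hw : ∀ n, 1 < w n) {n l : ℕ}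
    (hcop : ∀ m ≥ n, Nat.Coprime l (w m)) :
    ∀ (x : ↥(gammaSubgroup w n)) (k : ℕ),
      (x : Solenoid w).1 k ^ solU w n l k = (x : Solenoid w).1 k ^ solU w n l (k + 1) :=
  fun x k => circle_pow_eq_pow_of_modEq (gamma_coord_pow x.2 k) (solU_modEq_succ hw hcop k)

/-- hypothesis-check for `gammaPow` with constant exponent `l`. -/
private lemma hu_const_l {w : ℕ → ℕ} {n l : ℕ} :
    ∀ (x : ↥(gammaSubgroup w n)) (k : ℕ),
      (x : Solenoid w).1 k ^ (fun _ => l) k = (x : Solenoid w).1 k ^ (fun _ => l) (k + 1) :=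
  fun _ _ => rfl

/-- The conjugating homeomorphism `Γₙ ≃ₜ Γₙ`, raising each coordinate to the
power `solU w n l k` (an inverse of `l` modulo the order of the coordinate). -/
private noncomputable def conjHomeo (w : ℕ → ℕ) (hw : ∀ n, 1 < w n) (n l : ℕ)
    (hcop : ∀ m ≥ n, Nat.Coprime l (w m)) :
    ↥(gammaSubgroup w n) ≃ₜ ↥(gammaSubgroup w n) where
  toFun := gammaPow (solU w n l) (hu_solU hw hcop)
  invFun := gammaPow (fun _ => l) hu_const_l
  left_inv := by
    intro x
    apply Subtype.ext
    apply Subtype.ext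
    funext k
    show ((x : Solenoid w).1 k ^ solU w n l k) ^ l = (x : Solenoid w).1 k
    rw [← pow_mul]
    calc (x : Solenoid w).1 k ^ (solU w n l k * l)
        = (x : Solenoid w).1 k ^ 1 :=
          circle_pow_eq_pow_of_modEq (gamma_coord_pow x.2 k)
            (by simpa [mul_comm] using l_mul_solU_modEq hw hcop k)
      _ = (x : Solenoid w).1 k := pow_one _
  right_inv := by
    intro x
    apply Subtype.ext
    apply Subtype.ext
    funext k
    show ((x : Solenoid w).1 k ^ l) ^ solU w n l k = (x : Solenoid w).1 k
    rw [← pow_mul]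
    calc (x : Solenoid w).1 k ^ (l * solU w n l k)
        = (x : Solenoid w).1 k ^ 1 :=
          circle_pow_eq_pow_of_modEq (gamma_coord_pow x.2 k) (l_mul_solU_modEq hw hcop k)
      _ = (x : Solenoid w).1 k := pow_one _
  continuous_toFun := continuous_gammaPow (solU w n l) (hu_solU hw hcop)
  continuous_invFun := continuous_gammaPow (fun _ => l) hu_const_l

private lemma conjHomeo_apply (w : ℕ → ℕ) (hw : ∀ n, 1 < w n) (n l : ℕ)
    (hcop : ∀ m ≥ n, Nat.Coprime l (w m)) (x : ↥(gammaSubgroup w n)) :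
    conjHomeo w hw n l hcop x = gammaPow (solU w n l) (hu_solU hw hcop) x := rfl

/-- The generator `γ(w₁⋯wₙ)` as an element of `Γₙ`. -/
private noncomputable def gGamma (w : ℕ → ℕ) (hw : ∀ n, 1 < w n) (n : ℕ) :
    ↥(gammaSubgroup w n) :=
  ⟨solenoidGamma w hw (∏ j ∈ Finset.range n, (w j : ℝ)), solenoidGamma_mem_gamma w hw n⟩

private lemma psi_iterate (w : ℕ → ℕ) (hw : ∀ n, 1 < w n) (n : ℕ) (l : ℕ)
    (x : ↥(gammaSubgroup w n)) :
    (solenoidPsi w hw n)^[l] x = gGamma w hw n ^ l * x := by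
  induction l with
  | zero => simp
  | succ m ih =>
      rw [Function.iterate_succ_apply', ih, pow_succ', mul_assoc]
      rfl

private lemma gammaPow_g (w : ℕ → ℕ) (hw : ∀ n, 1 < w n) (n l : ℕ)
    (hcop : ∀ m ≥ n, Nat.Coprime l (w m)) :
    gammaPow (solU w n l) (hu_solU hw hcop) (gGamma w hw n ^ l) = gGamma w hw n := by
  apply Subtype.ext
  apply Subtype.ext
  funext k
  show ((gGamma w hw n ^ l : ↥(gammaSubgroup w n)) : Solenoid w).1 k ^ solU w n l k
    = (gGamma w hw n : Solenoid w).1 k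
  have hc : ((gGamma w hw n ^ l : ↥(gammaSubgroup w n)) : Solenoid w).1 k
      = (gGamma w hw n : Solenoid w).1 k ^ l := by
    rw [SubmonoidClass.coe_pow]
    rfl
  rw [hc, ← pow_mul]
  calc (gGamma w hw n : Solenoid w).1 k ^ (l * solU w n l k)
      = (gGamma w hw n : Solenoid w).1 k ^ 1 :=
        circle_pow_eq_pow_of_modEq (gamma_coord_pow (gGamma w hw n).2 k)
          (l_mul_solU_modEq hw hcop k)
    _ = _ := pow_one _

/-- The key conjugacy: `h ∘ ψₙ^[l] = ψₙ ∘ h`. -/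
private lemma conj_eq (w : ℕ → ℕ) (hw : ∀ n, 1 < w n) (n l : ℕ)
    (hcop : ∀ m ≥ n, Nat.Coprime l (w m)) (x : ↥(gammaSubgroup w n)) :
    conjHomeo w hw n l hcop ((solenoidPsi w hw n)^[l] x)
      = solenoidPsi w hw n (conjHomeo w hw n l hcop x) := by
  have hpsi : ∀ y : ↥(gammaSubgroup w n), solenoidPsi w hw n y = gGamma w hw n * y :=
    fun _ => rfl
  rw [psi_iterate, conjHomeo_apply, conjHomeo_apply, gammaPow_mul, gammaPow_g w hw n l hcop, hpsi]

private lemma solenoidGamma_zero (w : ℕ → ℕ) (hw : ∀ n, 1 < w n) :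
    solenoidGamma w hw 0 = 1 := by
  apply Subtype.ext
  funext k
  show Circle.exp (2 * Real.pi * 0 / ∏ j ∈ Finset.range k, (w j : ℝ)) = 1
  rw [mul_zero, zero_div, Circle.exp_zero]

private lemma isClosed_solenoid (w : ℕ → ℕ) :
    IsClosed {x : ℕ → Circle | ∀ k, x k = x (k + 1) ^ w k} := by
  have : {x : ℕ → Circle | ∀ k, x k = x (k + 1) ^ w k}
      = ⋂ k, {x : ℕ → Circle | x k = x (k + 1) ^ w k} := by
    ext x; simp [Set.mem_iInter]
  rw [this]
  exact isClosed_iInter fun k => isClosed_eq (continuous_apply k) ((continuous_apply (k + 1)).pow _)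

private lemma isClosed_gamma (w : ℕ → ℕ) (n : ℕ) :
    IsClosed {x : Solenoid w | ∀ k ≤ n, (x : ℕ → Circle) k = 1} := by
  have : {x : Solenoid w | ∀ k ≤ n, (x : ℕ → Circle) k = 1}
      = ⋂ k, ⋂ (_ : k ≤ n), {x : Solenoid w | (x : ℕ → Circle) k = 1} := by
    ext x; simp [Set.mem_iInter]
  rw [this]
  exact isClosed_iInter fun k => isClosed_iInter fun _ =>
    isClosed_eq ((continuous_apply k).comp continuous_subtype_val) continuous_const

private lemma continuous_solenoidGamma (w : ℕ → ℕ) (hw : ∀ n, 1 < w n) :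
    Continuous (solenoidGamma w hw) := by
  apply Continuous.subtype_mk
  exact continuous_pi fun k => Circle.exp.continuous.comp (by fun_prop)


/-- The map `Γₙ × [0,1] → Θ`, `(x, t) ↦ γ((w₁⋯wₙ) t) · h(x)`, where `h` is the
conjugating homeomorphism. -/
private noncomputable def bigF (w : ℕ → ℕ) (hw : ∀ n, 1 < w n) (n l : ℕ)
    (hcop : ∀ m ≥ n, Nat.Coprime l (w m)) :
    ↥(gammaSubgroup w n) × ↥unitInterval → Solenoid w := fun p =>
  solenoidGamma w hw ((∏ j ∈ Finset.range n, (w j : ℝ)) * (p.2 : ℝ))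
    * ((conjHomeo w hw n l hcop p.1 : ↥(gammaSubgroup w n)) : Solenoid w)

private lemma continuous_bigF (w : ℕ → ℕ) (hw : ∀ n, 1 < w n) (n l : ℕ)
    (hcop : ∀ m ≥ n, Nat.Coprime l (w m)) :
    Continuous (bigF w hw n l hcop) := by
  apply Continuous.mul
  · exact (continuous_solenoidGamma w hw).comp
      (continuous_const.mul (continuous_subtype_val.comp continuous_snd))
  · exact continuous_subtype_val.comp
      ((conjHomeo w hw n l hcop).continuous.comp continuous_fst)

private lemma bigF_rel (w : ℕ → ℕ) (hw : ∀ n, 1 < w n) (n l : ℕ)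
    (hcop : ∀ m ≥ n, Nat.Coprime l (w m)) :
    ∀ a b, MappingTorusRel ((solenoidPsi w hw n)^[l]) a b →
      bigF w hw n l hcop a = bigF w hw n l hcop b := by
  rintro ⟨x, t⟩ ⟨y, s⟩ ⟨ht, hs, hy⟩
  dsimp only at ht hs hy
  subst ht hs hy
  show solenoidGamma w hw ((∏ j ∈ Finset.range n, (w j : ℝ)) * ((1 : ↥unitInterval) : ℝ))
      * ((conjHomeo w hw n l hcop x : ↥(gammaSubgroup w n)) : Solenoid w)
    = solenoidGamma w hw ((∏ j ∈ Finset.range n, (w j : ℝ)) * ((0 : ↥unitInterval) : ℝ))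
      * ((conjHomeo w hw n l hcop ((solenoidPsi w hw n)^[l] x) : ↥(gammaSubgroup w n)) : Solenoid w)
  rw [conj_eq]
  have c1 : ((1 : ↥unitInterval) : ℝ) = 1 := rfl
  have c0 : ((0 : ↥unitInterval) : ℝ) = 0 := rfl
  rw [c1, c0, mul_one, mul_zero, solenoidGamma_zero, one_mul]
  rfl

/-- The `n`-th coordinate of `bigF p` is `exp(2π t)`. -/
private lemma bigF_coord_n (w : ℕ → ℕ) (hw : ∀ n, 1 < w n) (n l : ℕ)
    (hcop : ∀ m ≥ n, Nat.Coprime l (w m)) (p : ↥(gammaSubgroup w n) × ↥unitInterval) :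
    ((bigF w hw n l hcop p : Solenoid w) : ℕ → Circle) n
      = Circle.exp (2 * Real.pi * (p.2 : ℝ)) := by
  show Circle.exp (2 * Real.pi * ((∏ j ∈ Finset.range n, (w j : ℝ)) * (p.2 : ℝ))
        / ∏ j ∈ Finset.range n, (w j : ℝ))
      * ((conjHomeo w hw n l hcop p.1 : Solenoid w) : ℕ → Circle) n = _
  rw [(conjHomeo w hw n l hcop p.1).2 n le_rfl, mul_one]
  congr 1
  have hne := prod_w_ne_zero hw n
  field_simp

private lemma bigF_inj (w : ℕ → ℕ) (hw : ∀ n, 1 < w n) (n l : ℕ)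
    (hcop : ∀ m ≥ n, Nat.Coprime l (w m))
    (p q : ↥(gammaSubgroup w n) × ↥unitInterval)
    (heq : bigF w hw n l hcop p = bigF w hw n l hcop q) :
    Quot.mk (MappingTorusRel ((solenoidPsi w hw n)^[l])) p
      = Quot.mk (MappingTorusRel ((solenoidPsi w hw n)^[l])) q := by
  obtain ⟨x, t⟩ := p
  obtain ⟨y, s⟩ := q
  have hexp : Circle.exp (2 * Real.pi * (t : ℝ)) = Circle.exp (2 * Real.pi * (s : ℝ)) := by
    rw [← bigF_coord_n w hw n l hcop (x, t), ← bigF_coord_n w hw n l hcop (y, s), heq]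
  have hone : Circle.exp (2 * Real.pi * (t : ℝ) - 2 * Real.pi * (s : ℝ)) = 1 := by
    rw [sub_eq_add_neg, Circle.exp_add, Circle.exp_neg, hexp, mul_inv_cancel]
  obtain ⟨m, hm⟩ := Circle.exp_eq_one.mp hone
  have h2πne : (2 * Real.pi) ≠ 0 := by positivity
  have hts : (t : ℝ) - (s : ℝ) = m := by
    have h1 : ((t : ℝ) - (s : ℝ)) * (2 * Real.pi) = (m : ℝ) * (2 * Real.pi) := by
      rw [← hm]; ring
    exact mul_right_cancel₀ h2πne h1
  have ht0 := t.2.1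
  have ht1 := t.2.2
  have hs0 := s.2.1
  have hs1 := s.2.2
  have hmlb : (-1 : ℤ) ≤ m := by
    have : (-1 : ℝ) ≤ (m : ℝ) := by rw [← hts]; linarith
    exact_mod_cast this
  have hmub : m ≤ 1 := by
    have : (m : ℝ) ≤ 1 := by rw [← hts]; linarith
    exact_mod_cast this
  interval_cases m
  · -- m = -1 : t = 0, s = 1, x = f y
    have htr : (t : ℝ) = 0 := by
      have : (t : ℝ) - s = -1 := by rw [hts]; norm_num
      linarith
    have hsr : (s : ℝ) = 1 := by
      have : (t : ℝ) - s = -1 := by rw [hts]; norm_num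
      linarith
    have hxy : x = (solenoidPsi w hw n)^[l] y := by
      have e1 : bigF w hw n l hcop (x, t)
          = ((conjHomeo w hw n l hcop x : ↥(gammaSubgroup w n)) : Solenoid w) := by
        show solenoidGamma w hw ((∏ j ∈ Finset.range n, (w j : ℝ)) * (t : ℝ)) * _ = _
        rw [htr, mul_zero, solenoidGamma_zero, one_mul]
      have e2 : bigF w hw n l hcop (y, s)
          = ((solenoidPsi w hw n (conjHomeo w hw n l hcop y) : ↥(gammaSubgroup w n))
              : Solenoid w) := by
        show solenoidGamma w hw ((∏ j ∈ Finset.range n, (w j : ℝ)) * (s : ℝ)) * _ = _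
        rw [hsr, mul_one]
        rfl
      have e3 := e1.symm.trans (heq.trans e2)
      have e4 : conjHomeo w hw n l hcop x
          = solenoidPsi w hw n (conjHomeo w hw n l hcop y) := Subtype.ext e3
      rw [← conj_eq] at e4
      exact (conjHomeo w hw n l hcop).injective e4
    exact (Quot.sound ⟨Subtype.ext hsr, Subtype.ext htr, hxy⟩).symm
  · -- m = 0 : t = s, x = y
    have htsr : (t : ℝ) = s := by
      have : (t : ℝ) - s = 0 := by rw [hts]; norm_num
      linarith
    have hteq : t = s := Subtype.ext htsr
    subst hteq
    have e3 : ((conjHomeo w hw n l hcop x : ↥(gammaSubgroup w n)) : Solenoid w)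
        = ((conjHomeo w hw n l hcop y : ↥(gammaSubgroup w n)) : Solenoid w) :=
      mul_left_cancel heq
    have e4 : conjHomeo w hw n l hcop x = conjHomeo w hw n l hcop y := Subtype.ext e3
    have : x = y := (conjHomeo w hw n l hcop).injective e4
    rw [this]
  · -- m = 1 : t = 1, s = 0, y = f x
    have htr : (t : ℝ) = 1 := by
      have : (t : ℝ) - s = 1 := by rw [hts]; norm_num
      linarith
    have hsr : (s : ℝ) = 0 := by
      have : (t : ℝ) - s = 1 := by rw [hts]; norm_num
      linarith
    have hxy : y = (solenoidPsi w hw n)^[l] x := by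
      have e1 : bigF w hw n l hcop (y, s)
          = ((conjHomeo w hw n l hcop y : ↥(gammaSubgroup w n)) : Solenoid w) := by
        show solenoidGamma w hw ((∏ j ∈ Finset.range n, (w j : ℝ)) * (s : ℝ)) * _ = _
        rw [hsr, mul_zero, solenoidGamma_zero, one_mul]
      have e2 : bigF w hw n l hcop (x, t)
          = ((solenoidPsi w hw n (conjHomeo w hw n l hcop x) : ↥(gammaSubgroup w n))
              : Solenoid w) := by
        show solenoidGamma w hw ((∏ j ∈ Finset.range n, (w j : ℝ)) * (t : ℝ)) * _ = _
        rw [htr, mul_one]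
        rfl
      have e3 := e1.symm.trans (heq.symm.trans e2)
      have e4 : conjHomeo w hw n l hcop y
          = solenoidPsi w hw n (conjHomeo w hw n l hcop x) := Subtype.ext e3
      rw [← conj_eq] at e4
      exact (conjHomeo w hw n l hcop).injective e4
    exact Quot.sound ⟨Subtype.ext htr, Subtype.ext hsr, hxy⟩

private lemma bigF_surj (w : ℕ → ℕ) (hw : ∀ n, 1 < w n) (n l : ℕ)
    (hcop : ∀ m ≥ n, Nat.Coprime l (w m)) :
    Function.Surjective (bigF w hw n l hcop) := by
  intro y
  set z := (y : ℕ → Circle) n with hzdef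
  set t0 := Int.fract (Complex.arg z / (2 * Real.pi)) with ht0def
  have ht0mem : t0 ∈ unitInterval := ⟨Int.fract_nonneg _, (Int.fract_lt_one _).le⟩
  have h2πne : (2 * Real.pi) ≠ 0 := by positivity
  have hz : Circle.exp (2 * Real.pi * t0) = z := by
    have harg : 2 * Real.pi * t0
        = Complex.arg z + ((-⌊Complex.arg z / (2 * Real.pi)⌋ : ℤ) : ℝ) * (2 * Real.pi) := by
      rw [ht0def, Int.fract]
      push_cast
      field_simp
      ring
    rw [harg, Circle.exp_add, Circle.exp_int_mul_two_pi, mul_one, Circle.exp_arg]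
  have hmem : (solenoidGamma w hw ((∏ j ∈ Finset.range n, (w j : ℝ)) * t0))⁻¹ * y
      ∈ gammaSubgroup w n := by
    intro k hk
    have hcoordk : (((solenoidGamma w hw ((∏ j ∈ Finset.range n, (w j : ℝ)) * t0))⁻¹ * y
          : Solenoid w) : ℕ → Circle) k
        = (Circle.exp (2 * Real.pi * ((∏ j ∈ Finset.range n, (w j : ℝ)) * t0)
            / ∏ j ∈ Finset.range k, (w j : ℝ)))⁻¹ * (y : ℕ → Circle) k := rfl
    rw [hcoordk, inv_mul_eq_one]
    have hyk : (y : ℕ → Circle) k = z ^ solM w k n := sol_coord_pow y.2 hk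
    have hWsplit : (∏ j ∈ Finset.range n, (w j : ℝ))
        = (∏ j ∈ Finset.range k, (w j : ℝ)) * ((solM w k n : ℕ) : ℝ) := by
      rw [solM, Nat.cast_prod, Finset.prod_range_mul_prod_Ico (fun j => ((w j : ℕ) : ℝ)) hk]
    have hargk : 2 * Real.pi * ((∏ j ∈ Finset.range n, (w j : ℝ)) * t0)
        / ∏ j ∈ Finset.range k, (w j : ℝ)
        = ((solM w k n : ℕ) : ℝ) * (2 * Real.pi * t0) := by
      rw [hWsplit]
      have hne := prod_w_ne_zero hw k
      field_simp
    rw [hargk, ← circle_exp_pow, hz, hyk]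
  refine ⟨((conjHomeo w hw n l hcop).symm
      ⟨(solenoidGamma w hw ((∏ j ∈ Finset.range n, (w j : ℝ)) * t0))⁻¹ * y, hmem⟩,
      ⟨t0, ht0mem⟩), ?_⟩
  show solenoidGamma w hw ((∏ j ∈ Finset.range n, (w j : ℝ)) * t0)
      * ((conjHomeo w hw n l hcop ((conjHomeo w hw n l hcop).symm
          ⟨(solenoidGamma w hw ((∏ j ∈ Finset.range n, (w j : ℝ)) * t0))⁻¹ * y, hmem⟩)
        : ↥(gammaSubgroup w n)) : Solenoid w) = y
  rw [Homeomorph.apply_symm_apply]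
  show solenoidGamma w hw ((∏ j ∈ Finset.range n, (w j : ℝ)) * t0)
      * ((solenoidGamma w hw ((∏ j ∈ Finset.range n, (w j : ℝ)) * t0))⁻¹ * y) = y
  rw [mul_inv_cancel_left]

end Claim5Aux

/-- **Claim 5:** If `l` is a positive integer relatively prime to `wₙ'` for all
`n' > n` (in our indexing, coprime to `w m` for all `m ≥ n`), then the mapping
torus of the `l`-th iterate `ψₙ^l` of the translation `ψₙ : Γₙ → Γₙ` is
homeomorphic to the solenoid `Θ`. -/
theorem mapping_torus_iterate_homeomorphic_solenoid
    (w : ℕ → ℕ) (hw : ∀ n, 1 < w n) (n : ℕ)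
    (l : ℕ) (hl : 0 < l) (hcop : ∀ m ≥ n, Nat.Coprime l (w m)) :
    Nonempty (MappingTorus ((solenoidPsi w hw n)^[l]) ≃ₜ Solenoid w) := by
  haveI hcs : CompactSpace (Solenoid w) :=
    isCompact_iff_compactSpace.mp (isClosed_solenoid w).isCompact
  haveI hcg : CompactSpace ↥(gammaSubgroup w n) :=
    isCompact_iff_compactSpace.mp (isClosed_gamma w n).isCompact
  haveI : CompactSpace (MappingTorus ((solenoidPsi w hw n)^[l])) :=
    inferInstanceAs (CompactSpace (Quot (MappingTorusRel ((solenoidPsi w hw n)^[l]))))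
  have hbij : Function.Bijective
      (Quot.lift (bigF w hw n l hcop) (bigF_rel w hw n l hcop) :
        MappingTorus ((solenoidPsi w hw n)^[l]) → Solenoid w) := by
    constructor
    · intro a b h
      induction a using Quot.ind with | _ p => ?_
      induction b using Quot.ind with | _ q => ?_
      exact bigF_inj w hw n l hcop p q h
    · intro y
      obtain ⟨p, hp⟩ := bigF_surj w hw n l hcop y
      exact ⟨Quot.mk _ p, hp⟩
  have hcont : Continuous
      (Quot.lift (bigF w hw n l hcop) (bigF_rel w hw n l hcop) :
        MappingTorus ((solenoidPsi w hw n)^[l]) → Solenoid w) :=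
    continuous_quot_lift _ (continuous_bigF w hw n l hcop)
  exact ⟨Continuous.homeoOfEquivCompactToT2 (f := Equiv.ofBijective _ hbij) hcont⟩
end
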